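/- With R_i = M_{p^i}(F) ⊕ M_{p^i}(F), involution (A,B)* = (Bᵀ,Aᵀ), and the embedding φ_i of signature (k+1,k) as above (p = 2k+1), for every (M, −Mᵀ) in the skew part K(R_i,*), writing φ_i(M,−Mᵀ) = (M₁, −M₁ᵀ), one has Tr(M₁) = Tr(M). In particular, if Tr(M) ≠ 0 then the image of (M,−Mᵀ) in any R_j, j ≥ i, is never a sum of commutators of skew elements. -/
import Mathlib


open Matrix

/-- `Mₚᵢ(F)`, the full matrix algebra of size `pⁱ` with `p = 2k+1`. -/
abbrev MatP (F : Type*) (k i : ℕ) : Type _ :=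
  Matrix (Fin ((2 * k + 1) ^ i)) (Fin ((2 * k + 1) ^ i)) F

/-- `Rᵢ = M_{pⁱ}(F) ⊕ M_{pⁱ}(F)`. -/
abbrev Rlev (F : Type*) (k i : ℕ) : Type _ := MatP F k i × MatP F k i

/-- Reindexing equivalence `Fin pⁱ × Fin p ≃ Fin pⁱ⁺¹`. -/
def finPowEquiv (k i : ℕ) :
    Fin ((2 * k + 1) ^ i) × Fin (2 * k + 1) ≃ Fin ((2 * k + 1) ^ (i + 1)) :=
  finProdFinEquiv.trans (finCongr (pow_succ (2 * k + 1) i).symm)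

/-- `diag(M,…,M,N,…,N)` with `k+1` copies of `M` and `k` copies of `N`, viewed as a
matrix of size `pⁱ⁺¹`. -/
def stepMat {F : Type*} [Zero F] {k i : ℕ} (M N : MatP F k i) : MatP F k (i + 1) :=
  Matrix.reindex (finPowEquiv k i) (finPowEquiv k i)
    (Matrix.blockDiagonal fun j : Fin (2 * k + 1) => if (j : ℕ) < k + 1 then M else N)

/-- The embedding `φᵢ : Rᵢ → Rᵢ₊₁` of signature `(k+1, k, 0)`. -/
def step {F : Type*} [Zero F] {k i : ℕ} (x : Rlev F k i) : Rlev F k (i + 1) :=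
  (stepMat x.1 x.2, stepMat x.2 x.1)

/-- The composite embedding `Rᵢ → R_{i+j}`. -/
def embed {F : Type*} [Zero F] {k i : ℕ} : ∀ j, Rlev F k i → Rlev F k (i + j)
  | 0 => id
  | j + 1 => fun x => step (embed j x)

/-- The skew part `K(Rₘ, *) = {r : r* = -r}` for the involution `(A,B)* = (Bᵀ,Aᵀ)`. -/
def skewSet (F : Type*) [Neg F] (k m : ℕ) : Set (Rlev F k m) :=
  {r | ((r.2)ᵀ, (r.1)ᵀ) = -r}


section lemmas

variable {F : Type*} [Field F] {k i : ℕ}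

lemma trace_reindex' {m n : Type*} [Fintype m] [Fintype n] (e : m ≃ n) (A : Matrix m m F) :
    Matrix.trace (Matrix.reindex e e A) = Matrix.trace A := by
  simp only [Matrix.trace, Matrix.reindex_apply, Matrix.diag, Matrix.submatrix_apply]
  exact Fintype.sum_equiv e.symm _ _ (fun _ => rfl)

lemma stepMat_transpose (M N : MatP F k i) : (stepMat M N)ᵀ = stepMat Mᵀ Nᵀ := by
  unfold stepMat
  rw [Matrix.transpose_reindex, Matrix.blockDiagonal_transpose]
  simp only [apply_ite (Matrix.transpose : MatP F k i → MatP F k i)]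

lemma stepMat_neg (M N : MatP F k i) : stepMat (-M) (-N) = -(stepMat M N) := by
  unfold stepMat
  simp only [← apply_ite (Neg.neg : MatP F k i → MatP F k i), Matrix.reindex_apply]
  rw [show (fun j : Fin (2 * k + 1) => -if (j : ℕ) < k + 1 then M else N) =
      -(fun j : Fin (2 * k + 1) => if (j : ℕ) < k + 1 then M else N) from rfl,
    Matrix.blockDiagonal_neg, Matrix.submatrix_neg]
  rfl

lemma skew_step (M : MatP F k i) :
    (step (M, -(Mᵀ))).2 = -((step (M, -(Mᵀ))).1)ᵀ := by
  show stepMat (-(Mᵀ)) M = -(stepMat M (-(Mᵀ)))ᵀ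
  rw [stepMat_transpose, ← stepMat_neg]
  simp

lemma trace_step (M : MatP F k i) :
    Matrix.trace (step (M, -(Mᵀ))).1 = Matrix.trace M := by
  show Matrix.trace (stepMat M (-(Mᵀ))) = Matrix.trace M
  unfold stepMat
  rw [trace_reindex', Matrix.trace_blockDiagonal]
  have : ∀ j : Fin (2 * k + 1),
      Matrix.trace (if (j : ℕ) < k + 1 then M else -(Mᵀ)) =
        if (j : ℕ) < k + 1 then Matrix.trace M else -Matrix.trace M := by
    intro j; by_cases h : (j : ℕ) < k + 1 <;> simp [h]
  rw [Finset.sum_congr rfl (fun j _ => this j)]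
  rw [Fin.sum_univ_eq_sum_range (fun j => if j < k + 1 then Matrix.trace M else -Matrix.trace M)]
  rw [← Finset.sum_range_add_sum_Ico _ (show k + 1 ≤ 2 * k + 1 by omega)]
  rw [Finset.sum_congr rfl (fun j hj => if_pos (Finset.mem_range.mp hj)),
    Finset.sum_congr rfl (fun j hj => if_neg (by
      have := (Finset.mem_Ico.mp hj).1; omega))]
  rw [Finset.sum_const, Finset.sum_const, Finset.card_range, Nat.card_Ico,
    show 2 * k + 1 - (k + 1) = k by omega]
  simp only [nsmul_eq_mul, smul_neg]
  push_cast
  ring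

end lemmas


section main

variable {F : Type*} [Field F] {k i : ℕ}

lemma embed_form (M : MatP F k i) : ∀ j, ∃ M' : MatP F k (i + j),
    embed j (M, -(Mᵀ)) = (M', -(M'ᵀ)) ∧ Matrix.trace M' = Matrix.trace M
  | 0 => ⟨M, rfl, rfl⟩
  | j + 1 => by
    obtain ⟨M', h1, h2⟩ := embed_form M j
    refine ⟨(step ((M', -(M'ᵀ)) : Rlev F k (i + j))).1, ?_, ?_⟩
    · show step (embed j (M, -(Mᵀ))) = _
      rw [h1]
      exact Prod.ext rfl (skew_step M')
    · rw [trace_step M', h2]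

theorem stmt17' (k i : ℕ) (M : MatP F k i) :
    (step (M, -(Mᵀ))).2 = -((step (M, -(Mᵀ))).1)ᵀ ∧
    Matrix.trace (step (M, -(Mᵀ))).1 = Matrix.trace M ∧
    (Matrix.trace M ≠ 0 → ∀ j : ℕ,
      embed j (M, -(Mᵀ)) ∉ Submodule.span F
        {x : Rlev F k (i + j) | ∃ a ∈ skewSet F k (i + j), ∃ b ∈ skewSet F k (i + j),
          x = a * b - b * a}) := by
  refine ⟨skew_step M, trace_step M, fun hM j hmem => ?_⟩
  set T : Rlev F k (i + j) →ₗ[F] F :=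
    (Matrix.traceLinearMap (Fin ((2 * k + 1) ^ (i + j))) F F).comp
      (LinearMap.fst F (MatP F k (i + j)) (MatP F k (i + j))) with hT
  have hsub : {x : Rlev F k (i + j) | ∃ a ∈ skewSet F k (i + j), ∃ b ∈ skewSet F k (i + j),
      x = a * b - b * a} ⊆ (LinearMap.ker T : Set (Rlev F k (i + j))) := by
    rintro x ⟨a, _, b, _, rfl⟩
    simp only [SetLike.mem_coe, LinearMap.mem_ker, hT, LinearMap.comp_apply,
      LinearMap.fst_apply, Matrix.traceLinearMap_apply, Prod.fst_sub, Prod.fst_mul,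
      Matrix.trace_sub, Matrix.trace_mul_comm a.1 b.1, sub_self]
  have hker : embed j (M, -(Mᵀ)) ∈ LinearMap.ker T :=
    (Submodule.span_le.mpr hsub) hmem
  obtain ⟨M', h1, h2⟩ := embed_form M j
  rw [LinearMap.mem_ker, hT, h1] at hker
  simp only [LinearMap.comp_apply, LinearMap.fst_apply, Matrix.traceLinearMap_apply] at hker
  exact hM (h2 ▸ hker)

end main

/-- For `p = 2k+1` an odd prime and the signature `(k+1,k)` embedding `φᵢ`, every skew
element `(M, -(Mᵀ))` of `Rᵢ` is sent to a skew element `(M₁, -M₁ᵀ)` with `Tr M₁ = Tr M`;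
in particular, if `Tr M ≠ 0` then the image of `(M, -(Mᵀ))` in any `R_{i+j}` is never a sum
of commutators of skew elements. -/
theorem stmt17 {F : Type*} [Field F] (k i : ℕ) (hp : Nat.Prime (2 * k + 1))
    (M : MatP F k i) :
    (step (M, -(Mᵀ))).2 = -((step (M, -(Mᵀ))).1)ᵀ ∧
    Matrix.trace (step (M, -(Mᵀ))).1 = Matrix.trace M ∧
    (Matrix.trace M ≠ 0 → ∀ j : ℕ,
      embed j (M, -(Mᵀ)) ∉ Submodule.span F
        {x : Rlev F k (i + j) | ∃ a ∈ skewSet F k (i + j), ∃ b ∈ skewSet F k (i + j),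
          x = a * b - b * a}) := by
  exact stmt17' k i M
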